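/- The function f : ℝ^{2×2} → ℝ defined by f(A) = σ₁(A)^p + σ₂(A)^p + p·exp(1 − det A), with p > 2, is polyconvex: there exists a convex function F : ℝ^{2×2} × ℝ → ℝ such that f(A) = F(A, det A) for every A ∈ ℝ^{2×2}. -/

import Mathlib

open Matrix
/-- The larger singular value `σ₁(A)` of a real 2×2 matrix `A`: the square root of the
larger eigenvalue of `AᵀA` (whose eigenvalues are the roots of
`λ² − tr(AᵀA) λ + (det A)²`). -/
noncomputable def sval1 (A : Matrix (Fin 2) (Fin 2) ℝ) : ℝ :=
  Real.sqrt ((Matrix.trace (Aᵀ * A) +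
    Real.sqrt ((Matrix.trace (Aᵀ * A)) ^ 2 - 4 * A.det ^ 2)) / 2)

/-- The smaller singular value `σ₂(A)` of a real 2×2 matrix `A`. -/
noncomputable def sval2 (A : Matrix (Fin 2) (Fin 2) ℝ) : ℝ :=
  Real.sqrt ((Matrix.trace (Aᵀ * A) -
    Real.sqrt ((Matrix.trace (Aᵀ * A)) ^ 2 - 4 * A.det ^ 2)) / 2)

/-- The registration regularizer integrand
`f(A) = σ₁(A)^p + σ₂(A)^p + p·exp(1 − det A)`. -/
noncomputable def freg (p : ℝ) (A : Matrix (Fin 2) (Fin 2) ℝ) : ℝ :=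
  sval1 A ^ p + sval2 A ^ p + p * Real.exp (1 - A.det)

/- ### Auxiliary machinery -/

/-- `u(A) = √((a+d)² + (b−c)²)`. -/
noncomputable def uf (A : Matrix (Fin 2) (Fin 2) ℝ) : ℝ :=
  Real.sqrt ((A 0 0 + A 1 1) ^ 2 + (A 0 1 - A 1 0) ^ 2)

/-- `v(A) = √((a−d)² + (b+c)²)`. -/
noncomputable def vf (A : Matrix (Fin 2) (Fin 2) ℝ) : ℝ :=
  Real.sqrt ((A 0 0 - A 1 1) ^ 2 + (A 0 1 + A 1 0) ^ 2)

/-- The symmetric gauge function `G(x,y) = (|x+y|/2)^p + (|x−y|/2)^p`. -/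
noncomputable def Gf (p x y : ℝ) : ℝ := (|x + y| / 2) ^ p + (|x - y| / 2) ^ p

lemma cauchy_schwarz2 (x1 x2 y1 y2 : ℝ) :
    x1 * y1 + x2 * y2 ≤ Real.sqrt (x1 ^ 2 + x2 ^ 2) * Real.sqrt (y1 ^ 2 + y2 ^ 2) := by
  have hs := Real.sq_sqrt (by positivity : (0:ℝ) ≤ x1 ^ 2 + x2 ^ 2)
  have ht := Real.sq_sqrt (by positivity : (0:ℝ) ≤ y1 ^ 2 + y2 ^ 2)
  have h1 := Real.sqrt_nonneg (x1 ^ 2 + x2 ^ 2)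
  have h2 := Real.sqrt_nonneg (y1 ^ 2 + y2 ^ 2)
  nlinarith [sq_nonneg (x1 * y2 - x2 * y1), sq_nonneg (x1 * y1 + x2 * y2),
    mul_nonneg h1 h2]

lemma tri2 (a b x1 x2 y1 y2 : ℝ) (ha : 0 ≤ a) (hb : 0 ≤ b) :
    Real.sqrt ((a * x1 + b * y1) ^ 2 + (a * x2 + b * y2) ^ 2) ≤
      a * Real.sqrt (x1 ^ 2 + x2 ^ 2) + b * Real.sqrt (y1 ^ 2 + y2 ^ 2) := by
  set s := Real.sqrt (x1 ^ 2 + x2 ^ 2) with hsdef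
  set t := Real.sqrt (y1 ^ 2 + y2 ^ 2) with htdef
  have hs2 : s ^ 2 = x1 ^ 2 + x2 ^ 2 := Real.sq_sqrt (by positivity)
  have ht2 : t ^ 2 = y1 ^ 2 + y2 ^ 2 := Real.sq_sqrt (by positivity)
  have hs0 : 0 ≤ s := Real.sqrt_nonneg _
  have ht0 : 0 ≤ t := Real.sqrt_nonneg _
  have hcs : x1 * y1 + x2 * y2 ≤ s * t := cauchy_schwarz2 x1 x2 y1 y2
  have key : (a * x1 + b * y1) ^ 2 + (a * x2 + b * y2) ^ 2 ≤ (a * s + b * t) ^ 2 := by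
    have h2ab : 0 ≤ 2 * (a * b) := by positivity
    have hmul := mul_le_mul_of_nonneg_left hcs h2ab
    calc (a * x1 + b * y1) ^ 2 + (a * x2 + b * y2) ^ 2
        = a ^ 2 * (x1 ^ 2 + x2 ^ 2) + b ^ 2 * (y1 ^ 2 + y2 ^ 2)
            + 2 * (a * b) * (x1 * y1 + x2 * y2) := by ring
      _ ≤ a ^ 2 * (x1 ^ 2 + x2 ^ 2) + b ^ 2 * (y1 ^ 2 + y2 ^ 2)
            + 2 * (a * b) * (s * t) := by linarith
      _ = (a * s + b * t) ^ 2 := by linear_combination (-(a ^ 2)) * hs2 - b ^ 2 * ht2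
  calc Real.sqrt ((a * x1 + b * y1) ^ 2 + (a * x2 + b * y2) ^ 2)
      ≤ Real.sqrt ((a * s + b * t) ^ 2) := Real.sqrt_le_sqrt key
    _ = a * s + b * t := Real.sqrt_sq (by positivity)

/-- `c^p ≤ a s^p + b t^p` whenever `0 ≤ c ≤ a s + b t`, a convexity step. -/
lemma rpow_step {p : ℝ} (hp : 1 ≤ p) {a b c s t : ℝ} (hs : 0 ≤ s) (ht : 0 ≤ t)
    (hc : 0 ≤ c) (hle : c ≤ a * s + b * t) (ha : 0 ≤ a) (hb : 0 ≤ b) (hab : a + b = 1) :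
    c ^ p ≤ a * s ^ p + b * t ^ p := by
  have h1 : c ^ p ≤ (a * s + b * t) ^ p :=
    Real.rpow_le_rpow hc hle (by linarith)
  have h2 := (convexOn_rpow hp).2 (Set.mem_Ici.2 hs) (Set.mem_Ici.2 ht) ha hb hab
  simp only [smul_eq_mul] at h2
  linarith

/-- Joint convexity inequality for `Gf`. -/
lemma Gf_comb {p : ℝ} (hp : 1 ≤ p) (a b x1 y1 x2 y2 : ℝ)
    (ha : 0 ≤ a) (hb : 0 ≤ b) (hab : a + b = 1) :
    Gf p (a * x1 + b * x2) (a * y1 + b * y2) ≤ a * Gf p x1 y1 + b * Gf p x2 y2 := by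
  unfold Gf
  have h1 : |a * x1 + b * x2 + (a * y1 + b * y2)| / 2 ≤
      a * (|x1 + y1| / 2) + b * (|x2 + y2| / 2) := by
    have : |a * x1 + b * x2 + (a * y1 + b * y2)| ≤ a * |x1 + y1| + b * |x2 + y2| := by
      calc |a * x1 + b * x2 + (a * y1 + b * y2)| = |a * (x1 + y1) + b * (x2 + y2)| := by
            ring_nf
        _ ≤ |a * (x1 + y1)| + |b * (x2 + y2)| := abs_add_le _ _
        _ = a * |x1 + y1| + b * |x2 + y2| := by
            rw [abs_mul, abs_mul, abs_of_nonneg ha, abs_of_nonneg hb]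
    linarith
  have h2 : |a * x1 + b * x2 - (a * y1 + b * y2)| / 2 ≤
      a * (|x1 - y1| / 2) + b * (|x2 - y2| / 2) := by
    have : |a * x1 + b * x2 - (a * y1 + b * y2)| ≤ a * |x1 - y1| + b * |x2 - y2| := by
      calc |a * x1 + b * x2 - (a * y1 + b * y2)| = |a * (x1 - y1) + b * (x2 - y2)| := by
            ring_nf
        _ ≤ |a * (x1 - y1)| + |b * (x2 - y2)| := abs_add_le _ _
        _ = a * |x1 - y1| + b * |x2 - y2| := by
            rw [abs_mul, abs_mul, abs_of_nonneg ha, abs_of_nonneg hb]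
    linarith
  have t1 := rpow_step hp (by positivity : (0:ℝ) ≤ |x1 + y1| / 2)
    (by positivity : (0:ℝ) ≤ |x2 + y2| / 2) (by positivity) h1 ha hb hab
  have t2 := rpow_step hp (by positivity : (0:ℝ) ≤ |x1 - y1| / 2)
    (by positivity : (0:ℝ) ≤ |x2 - y2| / 2) (by positivity) h2 ha hb hab
  linarith

lemma Gf_even {p x y : ℝ} : Gf p (-x) y = Gf p x y := by
  unfold Gf
  have h1 : |(-x) + y| = |x - y| := by rw [← abs_neg]; ring_nf
  have h2 : |(-x) - y| = |x + y| := by rw [← abs_neg]; ring_nf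
  rw [h1, h2, add_comm]

lemma Gf_symm {p x y : ℝ} : Gf p x y = Gf p y x := by
  unfold Gf
  rw [abs_sub_comm, add_comm x y]

/-- Monotonicity of `Gf` in the first argument on `[0,∞)`. -/
lemma Gf_mono {p : ℝ} (hp : 1 ≤ p) {x x' y : ℝ} (hx : 0 ≤ x) (hxx : x ≤ x') :
    Gf p x y ≤ Gf p x' y := by
  rcases eq_or_lt_of_le (hx.trans hxx) with h | h
  · have hx'0 : x' = 0 := h.symm
    have : x = 0 := le_antisymm (hxx.trans_eq hx'0) hx
    rw [this, hx'0]
  · set θ := (x' + x) / (2 * x') with hθdef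
    have hθ0 : 0 ≤ θ := by positivity
    have hθ1 : 0 ≤ 1 - θ := by
      rw [hθdef]
      rw [sub_nonneg, div_le_one (by linarith)]
      linarith
    have hsum : θ + (1 - θ) = 1 := by ring
    have hxeq : θ * x' + (1 - θ) * (-x') = x := by
      field_simp [hθdef]
      have h2 : θ * (2 * x') = x' + x := by
        rw [hθdef]; exact div_mul_cancel₀ _ (mul_pos two_pos h).ne'
      linear_combination h2
    have := Gf_comb hp θ (1 - θ) x' y (-x') y hθ0 hθ1 hsum
    rw [hxeq] at this
    have hy : θ * y + (1 - θ) * y = y := by ring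
    rw [hy, Gf_even (x := x')] at this
    linarith

lemma uf_nonneg (A : Matrix (Fin 2) (Fin 2) ℝ) : 0 ≤ uf A := Real.sqrt_nonneg _
lemma vf_nonneg (A : Matrix (Fin 2) (Fin 2) ℝ) : 0 ≤ vf A := Real.sqrt_nonneg _

lemma uf_convex_step (a b : ℝ) (ha : 0 ≤ a) (hb : 0 ≤ b)
    (X Y : Matrix (Fin 2) (Fin 2) ℝ) :
    uf (a • X + b • Y) ≤ a * uf X + b * uf Y := by
  unfold uf
  have e : ∀ i j, (a • X + b • Y) i j = a * X i j + b * Y i j := fun i j => rfl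
  rw [show ((a • X + b • Y) 0 0 + (a • X + b • Y) 1 1) =
      a * (X 0 0 + X 1 1) + b * (Y 0 0 + Y 1 1) by rw [e, e]; ring,
    show ((a • X + b • Y) 0 1 - (a • X + b • Y) 1 0) =
      a * (X 0 1 - X 1 0) + b * (Y 0 1 - Y 1 0) by rw [e, e]; ring]
  exact tri2 a b _ _ _ _ ha hb

lemma vf_convex_step (a b : ℝ) (ha : 0 ≤ a) (hb : 0 ≤ b)
    (X Y : Matrix (Fin 2) (Fin 2) ℝ) :
    vf (a • X + b • Y) ≤ a * vf X + b * vf Y := by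
  unfold vf
  have e : ∀ i j, (a • X + b • Y) i j = a * X i j + b * Y i j := fun i j => rfl
  rw [show ((a • X + b • Y) 0 0 - (a • X + b • Y) 1 1) =
      a * (X 0 0 - X 1 1) + b * (Y 0 0 - Y 1 1) by rw [e, e]; ring,
    show ((a • X + b • Y) 0 1 + (a • X + b • Y) 1 0) =
      a * (X 0 1 + X 1 0) + b * (Y 0 1 + Y 1 0) by rw [e, e]; ring]
  exact tri2 a b _ _ _ _ ha hb

lemma trace_det_uv (A : Matrix (Fin 2) (Fin 2) ℝ) :
    Matrix.trace (Aᵀ * A) = (uf A ^ 2 + vf A ^ 2) / 2 ∧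
      A.det = (uf A ^ 2 - vf A ^ 2) / 4 := by
  have hu2 : uf A ^ 2 = (A 0 0 + A 1 1) ^ 2 + (A 0 1 - A 1 0) ^ 2 :=
    Real.sq_sqrt (by positivity)
  have hv2 : vf A ^ 2 = (A 0 0 - A 1 1) ^ 2 + (A 0 1 + A 1 0) ^ 2 :=
    Real.sq_sqrt (by positivity)
  constructor
  · rw [Matrix.trace_fin_two]
    simp only [Matrix.mul_apply, Matrix.transpose_apply, Fin.sum_univ_two]
    rw [hu2, hv2]; ring
  · rw [Matrix.det_fin_two, hu2, hv2]; ring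

lemma sval_eq (A : Matrix (Fin 2) (Fin 2) ℝ) :
    sval1 A = (uf A + vf A) / 2 ∧ sval2 A = |uf A - vf A| / 2 := by
  obtain ⟨htr, hdet⟩ := trace_det_uv A
  have hu0 := uf_nonneg A
  have hv0 := vf_nonneg A
  have hdisc : (Matrix.trace (Aᵀ * A)) ^ 2 - 4 * A.det ^ 2 = (uf A * vf A) ^ 2 := by
    rw [htr, hdet]; ring
  have hsq : Real.sqrt ((Matrix.trace (Aᵀ * A)) ^ 2 - 4 * A.det ^ 2) = uf A * vf A := by
    rw [hdisc, Real.sqrt_sq (by positivity)]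
  constructor
  · rw [sval1, hsq, htr,
      show ((uf A ^ 2 + vf A ^ 2) / 2 + uf A * vf A) / 2 = ((uf A + vf A) / 2) ^ 2 by ring,
      Real.sqrt_sq (by positivity)]
  · rw [sval2, hsq, htr,
      show ((uf A ^ 2 + vf A ^ 2) / 2 - uf A * vf A) / 2 = ((uf A - vf A) / 2) ^ 2 by ring,
      Real.sqrt_sq_eq_abs, abs_div]
    norm_num

/-- For `p > 2`, the function `f(A) = σ₁(A)^p + σ₂(A)^p + p·exp(1 − det A)`
is polyconvex: there is a convex `F : ℝ^{2×2} × ℝ → ℝ` with `f(A) = F(A, det A)`. -/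
theorem freg_polyconvex (p : ℝ) (hp : 2 < p) :
    ∃ F : Matrix (Fin 2) (Fin 2) ℝ × ℝ → ℝ,
      ConvexOn ℝ Set.univ F ∧ ∀ A : Matrix (Fin 2) (Fin 2) ℝ, freg p A = F (A, A.det) := by
  have hp1 : 1 ≤ p := by linarith
  have hp0 : 0 ≤ p := by linarith
  refine ⟨fun q => Gf p (uf q.1) (vf q.1) + p * Real.exp (1 - q.2), ?_, ?_⟩
  · have hG : ConvexOn ℝ Set.univ
        (fun q : Matrix (Fin 2) (Fin 2) ℝ × ℝ => Gf p (uf q.1) (vf q.1)) := by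
      refine ⟨convex_univ, ?_⟩
      intro x _ y _ a b ha hb hab
      simp only [smul_eq_mul]
      have h1 : (a • x + b • y).1 = a • x.1 + b • y.1 := rfl
      have hu := uf_convex_step a b ha hb x.1 y.1
      have hv := vf_convex_step a b ha hb x.1 y.1
      rw [← h1] at hu hv
      have hu0 := uf_nonneg (a • x + b • y).1
      have hv0 := vf_nonneg (a • x + b • y).1
      have hU0 : 0 ≤ a * uf x.1 + b * uf y.1 := by
        have := uf_nonneg x.1; have := uf_nonneg y.1; positivity
      have step1 : Gf p (uf (a • x + b • y).1) (vf (a • x + b • y).1) ≤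
          Gf p (a * uf x.1 + b * uf y.1) (vf (a • x + b • y).1) :=
        Gf_mono hp1 hu0 hu
      have step2 : Gf p (a * uf x.1 + b * uf y.1) (vf (a • x + b • y).1) ≤
          Gf p (a * uf x.1 + b * uf y.1) (a * vf x.1 + b * vf y.1) := by
        have e1 : Gf p (a * uf x.1 + b * uf y.1) (vf (a • x + b • y).1) =
            Gf p (vf (a • x + b • y).1) (a * uf x.1 + b * uf y.1) := Gf_symm
        have e2 : Gf p (a * uf x.1 + b * uf y.1) (a * vf x.1 + b * vf y.1) =
            Gf p (a * vf x.1 + b * vf y.1) (a * uf x.1 + b * uf y.1) := Gf_symm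
        rw [e1, e2]
        exact Gf_mono hp1 hv0 hv
      have step3 := Gf_comb hp1 a b (uf x.1) (vf x.1) (uf y.1) (vf y.1) ha hb hab
      linarith
    have hE : ConvexOn ℝ Set.univ
        (fun q : Matrix (Fin 2) (Fin 2) ℝ × ℝ => p * Real.exp (1 - q.2)) := by
      refine ⟨convex_univ, ?_⟩
      intro x _ y _ a b ha hb hab
      simp only [smul_eq_mul]
      have h2 : (a • x + b • y).2 = a * x.2 + b * y.2 := rfl
      have h := convexOn_exp.2 (Set.mem_univ (1 - x.2)) (Set.mem_univ (1 - y.2)) ha hb hab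
      simp only [smul_eq_mul] at h
      have harg : 1 - (a • x + b • y).2 = a * (1 - x.2) + b * (1 - y.2) := by
        rw [h2]; nlinarith [hab]
      rw [harg]
      nlinarith [h, Real.exp_nonneg (a * (1 - x.2) + b * (1 - y.2))]
    exact hG.add hE
  · intro A
    obtain ⟨h1, h2⟩ := sval_eq A
    have hu0 := uf_nonneg A
    have hv0 := vf_nonneg A
    simp only [freg, h1, h2, Gf]
    have : |uf A + vf A| = uf A + vf A := abs_of_nonneg (by linarith)
    rw [this]
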